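/- Let c, c' ∈ {0,1}^n share a common subsequence of length n-2 (i.e., c ∈ B_2(c')). Then 𝟙_{10}(c) and 𝟙_{10}(c') share a common subsequence of length n-3, and likewise 𝟙_{01}(c) and 𝟙_{01}(c') share a common subsequence of length n-3. -/

import Mathlib

def ind10 (c : List Bool) : List Bool := List.zipWith (fun a b => a && !b) c c.tail

def ind01 (c : List Bool) : List Bool := List.zipWith (fun a b => !a && b) c c.tail

def indF (f : Bool → Bool → Bool) (c : List Bool) : List Bool :=
  List.zipWith f c c.tail

lemma indF_cons_cons (f : Bool → Bool → Bool) (a b : Bool) (l : List Bool) :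
    indF f (a :: b :: l) = f a b :: indF f (b :: l) := rfl

lemma indF_sublist_cons (f : Bool → Bool → Bool) (b : Bool) (l : List Bool) :
    (indF f l).Sublist (indF f (b :: l)) := by
  cases l with
  | nil => simp [indF]
  | cons w t => rw [indF_cons_cons]; exact List.Sublist.cons _ (List.Sublist.refl _)

lemma indF_cons_sublist (f : Bool → Bool → Bool)
    (hf : ∀ a b w : Bool, f a w = f a b ∨ f a w = f b w)
    {e l : List Bool} (h : e.Sublist l) :
    ∀ a, (indF f (a :: e)).Sublist (indF f (a :: l)) := by
  induction h with
  | slnil => intro a; simp [indF]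
  | @cons e l₂ b h ih =>
    intro a
    cases e with
    | nil => simp [indF]
    | cons w e' =>
      rw [indF_cons_cons, indF_cons_cons]
      rcases hf a b w with hfe | hfe
      · rw [hfe]
        refine List.Sublist.cons₂ _ ?_
        have : (indF f (w :: e')).Sublist (indF f (b :: w :: e')) :=
          indF_sublist_cons f b (w :: e')
        exact this.trans (ih b)
      · rw [hfe]
        exact List.Sublist.cons _ (ih b)
  | @cons_cons e₂ l₂ b h ih =>
    intro a
    rw [indF_cons_cons, indF_cons_cons]
    exact List.Sublist.cons₂ _ (ih b)

lemma indF_sublist (f : Bool → Bool → Bool)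
    (hf : ∀ a b w : Bool, f a w = f a b ∨ f a w = f b w)
    {e c : List Bool} (h : e.Sublist c) :
    (indF f e).Sublist (indF f c) := by
  induction h with
  | slnil => simp [indF]
  | @cons e l₂ b h ih => exact ih.trans (indF_sublist_cons f b l₂)
  | @cons_cons e₂ l₂ b h ih => exact indF_cons_sublist f hf h b

lemma indF_length (f : Bool → Bool → Bool) (e : List Bool) :
    (indF f e).length = e.length - 1 := by
  simp [indF]

theorem stmt11 (n : ℕ) (c c' : List Bool)
    (hc : c.length = n) (hc' : c'.length = n)
    (h : ∃ e : List Bool, e.length = n - 2 ∧ e.Sublist c ∧ e.Sublist c') :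
    (∃ s : List Bool, s.length = n - 3 ∧ s.Sublist (ind10 c) ∧ s.Sublist (ind10 c')) ∧
    (∃ s : List Bool, s.length = n - 3 ∧ s.Sublist (ind01 c) ∧ s.Sublist (ind01 c')) := by
  obtain ⟨e, he, h1, h2⟩ := h
  have hf10 : ∀ a b w : Bool, (a && !w) = (a && !b) ∨ (a && !w) = (b && !w) := by decide
  have hf01 : ∀ a b w : Bool, (!a && w) = (!a && b) ∨ (!a && w) = (!b && w) := by decide
  constructor
  · exact ⟨indF (fun a b => a && !b) e,
      by rw [indF_length, he]; omega,
      indF_sublist _ hf10 h1, indF_sublist _ hf10 h2⟩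
  · exact ⟨indF (fun a b => !a && b) e,
      by rw [indF_length, he]; omega,
      indF_sublist _ hf01 h1, indF_sublist _ hf01 h2⟩
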